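/- For a positive definite matrix S ∈ Sym_l(ℝ), R ∈ M_{n,l}(ℝ), A ∈ Sym_n(ℂ) with Re(aA) positive definite for a ∈ ℂ^× (so the integral converges), one has ∫_{M_{l,n}(ℝ)} exp(a·tr(−S[X]A + RXA)) dX = (det A)^{−l/2} (π/a)^{nl/2} (det S)^{−n/2} exp((a/4)·tr(S^{-1}[Rᵀ]A)), where S[X] = XᵀSX and S^{-1}[Rᵀ] = R S^{-1} Rᵀ. -/

import Mathlib

/-!
STATEMENT 5: Matrix Gaussian integral:
`∫_{M_{l,n}(ℝ)} exp(a·tr(−S[X]A + RXA)) dX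
 = (det A)^{−l/2} (π/a)^{nl/2} (det S)^{−n/2} exp((a/4)·tr(S⁻¹[Rᵀ]A))`,
here in the real convergent case `a > 0`, `A` real symmetric positive definite.
-/

open Matrix MeasureTheory Kronecker

set_option maxHeartbeats 1000000

section Aux

/-- One-dimensional Gaussian integral with a linear term. -/
lemma gauss_one (c : ℝ) : ∫ t : ℝ, Real.exp (-t ^ 2 + c * t)
    = Real.sqrt Real.pi * Real.exp (c ^ 2 / 4) := by
  have h : ∀ t : ℝ, -t ^ 2 + c * t = c ^ 2 / 4 + -1 * (t - c / 2) ^ 2 := by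
    intro t; ring
  simp_rw [h, Real.exp_add]
  rw [MeasureTheory.integral_const_mul]
  rw [show (∫ t : ℝ, Real.exp (-1 * (t - c / 2) ^ 2))
        = ∫ t : ℝ, Real.exp (-1 * t ^ 2) from
      integral_sub_right_eq_self (fun s : ℝ => Real.exp (-1 * s ^ 2)) (c / 2)]
  rw [integral_gaussian]
  rw [mul_comm]
  norm_num

/-- Gaussian integral over `Fin l → Fin n → ℝ` with linear term. -/
lemma gauss_pi (l n : ℕ) (c : Fin l → Fin n → ℝ) :
    ∫ Y : Fin l → Fin n → ℝ,
        Real.exp (-(∑ i, ∑ j, (Y i j) ^ 2) + ∑ i, ∑ j, c i j * Y i j)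
      = Real.sqrt Real.pi ^ (l * n) * Real.exp ((∑ i, ∑ j, c i j ^ 2) / 4) := by
  have h1 : ∀ Y : Fin l → Fin n → ℝ,
      Real.exp (-(∑ i, ∑ j, (Y i j) ^ 2) + ∑ i, ∑ j, c i j * Y i j)
        = ∏ i, (fun v : Fin n → ℝ =>
            Real.exp (-(∑ j, v j ^ 2) + ∑ j, c i j * v j)) (Y i) := by
    intro Y
    rw [← Real.exp_sum]
    congr 1
    rw [Finset.sum_add_distrib, ← Finset.sum_neg_distrib]
  simp_rw [h1]
  rw [show (∫ Y : Fin l → Fin n → ℝ, ∏ i,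
        Real.exp (-(∑ j, Y i j ^ 2) + ∑ j, c i j * Y i j))
      = ∏ i, ∫ v : Fin n → ℝ, Real.exp (-(∑ j, v j ^ 2) + ∑ j, c i j * v j) from
    integral_fintype_prod_eq_prod (ι := Fin l)
      (fun i (v : Fin n → ℝ) => Real.exp (-(∑ j, v j ^ 2) + ∑ j, c i j * v j))]
  have h2 : ∀ i, (∫ v : Fin n → ℝ,
      Real.exp (-(∑ j, v j ^ 2) + ∑ j, c i j * v j))
        = Real.sqrt Real.pi ^ n * Real.exp ((∑ j, c i j ^ 2) / 4) := by
    intro i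
    have h3 : ∀ v : Fin n → ℝ,
        Real.exp (-(∑ j, v j ^ 2) + ∑ j, c i j * v j)
          = ∏ j, (fun t : ℝ => Real.exp (-t ^ 2 + c i j * t)) (v j) := by
      intro v
      rw [← Real.exp_sum]
      congr 1
      rw [Finset.sum_add_distrib, ← Finset.sum_neg_distrib]
    simp_rw [h3]
    rw [show (∫ v : Fin n → ℝ, ∏ j, Real.exp (-(v j) ^ 2 + c i j * v j))
        = ∏ j, ∫ t : ℝ, Real.exp (-t ^ 2 + c i j * t) from
      integral_fintype_prod_eq_prod (ι := Fin n)
        (fun j (t : ℝ) => Real.exp (-t ^ 2 + c i j * t))]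
    simp_rw [gauss_one]
    rw [Finset.prod_mul_distrib, Finset.prod_const, ← Real.exp_sum, Finset.card_univ,
      Fintype.card_fin, ← Finset.sum_div]
  simp_rw [h2]
  rw [Finset.prod_mul_distrib, Finset.prod_const, ← Real.exp_sum, Finset.card_univ,
    Fintype.card_fin, ← pow_mul, ← Finset.sum_div, mul_comm n l]

/-- The linear "sandwich" map `X ↦ U * X * V` on the matrix space. -/
noncomputable def sandwichLM (l n : ℕ) (U : Matrix (Fin l) (Fin l) ℝ)
    (V : Matrix (Fin n) (Fin n) ℝ) :
    (Fin l → Fin n → ℝ) →ₗ[ℝ] (Fin l → Fin n → ℝ) where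
  toFun X := Matrix.of.symm (U * Matrix.of X * V)
  map_add' X Y := by
    change Matrix.of.symm (U * (Matrix.of X + Matrix.of Y) * V) = _
    rw [Matrix.mul_add, Matrix.add_mul]
    rfl
  map_smul' r X := by
    change Matrix.of.symm (U * (r • Matrix.of X) * V) = _
    rw [Matrix.mul_smul, Matrix.smul_mul]
    rfl

lemma sandwichLM_apply (l n : ℕ) (U : Matrix (Fin l) (Fin l) ℝ)
    (V : Matrix (Fin n) (Fin n) ℝ) (X : Fin l → Fin n → ℝ) :
    Matrix.of (sandwichLM l n U V X) = U * Matrix.of X * V := rfl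

lemma det_sandwichLM (l n : ℕ) (U : Matrix (Fin l) (Fin l) ℝ)
    (V : Matrix (Fin n) (Fin n) ℝ) :
    LinearMap.det (sandwichLM l n U V) = U.det ^ n * V.det ^ l := by
  classical
  let cur := LinearEquiv.piCurry ℝ (fun (_ : Fin l) (_ : Fin n) => ℝ)
  let M' : Matrix ((_ : Fin l) × Fin n) ((_ : Fin l) × Fin n) ℝ :=
    Matrix.of fun p q => U p.1 q.1 * V q.2 p.2
  have key : sandwichLM l n U V
      = (cur : _ →ₗ[ℝ] _) ∘ₗ Matrix.toLin' M' ∘ₗ (cur.symm : _ →ₗ[ℝ] _) := by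
    apply LinearMap.ext
    intro X
    funext i j
    simp only [LinearMap.coe_comp, Function.comp_apply, LinearEquiv.coe_coe,
      LinearEquiv.piCurry_apply, LinearEquiv.piCurry_symm_apply, Matrix.toLin'_apply]
    show (U * Matrix.of X * V) i j = M'.mulVec (Sigma.uncurry X) ⟨i, j⟩
    show (U * Matrix.of X * V) i j
      = ∑ q : (_ : Fin l) × Fin n, M' ⟨i, j⟩ q * Sigma.uncurry X q
    rw [← Finset.univ_sigma_univ, Finset.sum_sigma]
    rw [Matrix.mul_apply]
    simp_rw [Matrix.mul_apply, Finset.sum_mul]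
    rw [Finset.sum_comm]
    refine Finset.sum_congr rfl fun k _ => Finset.sum_congr rfl fun m _ => ?_
    show U i k * Matrix.of X k m * V m j = U i k * V m j * X k m
    simp only [Matrix.of_apply]
    ring
  rw [key, LinearMap.det_conj, LinearMap.det_toLin']
  have hM' : M' = (U ⊗ₖ Vᵀ).submatrix (Equiv.sigmaEquivProd (Fin l) (Fin n))
      (Equiv.sigmaEquivProd (Fin l) (Fin n)) := rfl
  rw [hM', Matrix.det_submatrix_equiv_self, Matrix.det_kronecker, Matrix.det_transpose]
  simp

/-- Change of variables by a linear map with nonzero determinant. -/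
lemma integral_comp_linearMap (l n : ℕ)
    (T : (Fin l → Fin n → ℝ) →ₗ[ℝ] (Fin l → Fin n → ℝ))
    (hT : LinearMap.det T ≠ 0) (f : (Fin l → Fin n → ℝ) → ℝ) (hf : Continuous f) :
    ∫ x, f (T x) = |LinearMap.det T|⁻¹ * ∫ x, f x := by
  have hmap := Measure.map_linearMap_addHaar_eq_smul_addHaar
    (μ := (volume : Measure (Fin l → Fin n → ℝ))) hT
  have hTc : Continuous T := T.continuous_of_finiteDimensional
  have h1 : ∫ x, f (T x) = ∫ y, f y ∂(Measure.map T volume) := by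
    rw [integral_map hTc.measurable.aemeasurable hf.aestronglyMeasurable]
  rw [h1, hmap, integral_smul_measure, ENNReal.toReal_ofReal (abs_nonneg _), abs_inv,
    smul_eq_mul]

end Aux

/-- Matrix Gaussian integral: for `S ∈ Sym_l(ℝ)` positive definite,
`R ∈ M_{n,l}(ℝ)`, `A ∈ Sym_n(ℝ)` positive definite and `a > 0`,
`∫ exp(a tr(−XᵀSX·A + RXA)) dX = (det A)^{−l/2}(π/a)^{nl/2}(det S)^{−n/2}
  exp((a/4) tr(RS⁻¹Rᵀ A))`. -/
theorem matrix_gaussian_integral (n l : ℕ) (a : ℝ) (ha : 0 < a)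
    (S : Matrix (Fin l) (Fin l) ℝ) (hSsym : S.IsSymm) (hS : S.PosDef)
    (A : Matrix (Fin n) (Fin n) ℝ) (hAsym : A.IsSymm) (hA : A.PosDef)
    (R : Matrix (Fin n) (Fin l) ℝ) :
    ∫ X : Fin l → Fin n → ℝ,
        Real.exp (a * (-(((Matrix.of X)ᵀ * S * Matrix.of X) * A).trace
          + ((R * Matrix.of X) * A).trace))
      = A.det ^ (-(l : ℝ) / 2) * (Real.pi / a) ^ (((n : ℝ) * l) / 2) *
        S.det ^ (-(n : ℝ) / 2) *
        Real.exp ((a / 4) * ((R * S⁻¹ * Rᵀ) * A).trace) := by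
  classical
  -- Square roots of `S` and `A`, kept opaque
  have hSdet : 0 < S.det := hS.det_pos
  have hAdet : 0 < A.det := hA.det_pos
  obtain ⟨P, hPP, hPsymm, hPdetnn⟩ :
      ∃ P : Matrix (Fin l) (Fin l) ℝ, P * P = S ∧ Pᵀ = P ∧ 0 ≤ P.det := by
    have hSpsd := hS.posSemidef
    open MatrixOrder in
    exact ⟨CFC.sqrt S, CFC.sqrt_mul_sqrt_self S hSpsd.nonneg,
      by rw [← Matrix.conjTranspose_eq_transpose_of_trivial]
         exact (CFC.sqrt_nonneg S).posSemidef.isHermitian,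
      (CFC.sqrt_nonneg S).posSemidef.det_nonneg⟩
  obtain ⟨Q, hQQ, hQsymm, hQdetnn⟩ :
      ∃ Q : Matrix (Fin n) (Fin n) ℝ, Q * Q = A ∧ Qᵀ = Q ∧ 0 ≤ Q.det := by
    have hApsd := hA.posSemidef
    open MatrixOrder in
    exact ⟨CFC.sqrt A, CFC.sqrt_mul_sqrt_self A hApsd.nonneg,
      by rw [← Matrix.conjTranspose_eq_transpose_of_trivial]
         exact (CFC.sqrt_nonneg A).posSemidef.isHermitian,
      (CFC.sqrt_nonneg A).posSemidef.det_nonneg⟩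
  have hPdet2 : P.det ^ 2 = S.det := by rw [sq, ← Matrix.det_mul, hPP]
  have hQdet2 : Q.det ^ 2 = A.det := by rw [sq, ← Matrix.det_mul, hQQ]
  have hPdetpos : 0 < P.det := by
    rcases hPdetnn.lt_or_eq with h | h
    · exact h
    · exfalso; rw [← h] at hPdet2; simp at hPdet2; rw [← hPdet2] at hSdet; simp at hSdet
  have hQdetpos : 0 < Q.det := by
    rcases hQdetnn.lt_or_eq with h | h
    · exact h
    · exfalso; rw [← h] at hQdet2; simp at hQdet2; rw [← hQdet2] at hAdet; simp at hAdet
  have hPunit : IsUnit P.det := isUnit_iff_ne_zero.mpr hPdetpos.ne'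
  have hQunit : IsUnit Q.det := isUnit_iff_ne_zero.mpr hQdetpos.ne'
  have hPdetsqrt : P.det = Real.sqrt S.det := by rw [← hPdet2, Real.sqrt_sq hPdetnn]
  have hQdetsqrt : Q.det = Real.sqrt A.det := by rw [← hQdet2, Real.sqrt_sq hQdetnn]
  -- square root of a
  set sa : ℝ := Real.sqrt a with hsadef
  have hsapos : 0 < sa := Real.sqrt_pos.mpr ha
  have hsa : sa * sa = a := Real.mul_self_sqrt ha.le
  have hsa2 : sa ^ 2 = a := by rw [sq, hsa]
  -- the change of variables
  set U : Matrix (Fin l) (Fin l) ℝ := sa⁻¹ • P⁻¹ with hUdef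
  set T := sandwichLM l n U Q⁻¹ with hTdef
  have hdetT : LinearMap.det T = sa⁻¹ ^ (l * n) * P.det⁻¹ ^ n * Q.det⁻¹ ^ l := by
    rw [hTdef, det_sandwichLM, hUdef, Matrix.det_smul, Matrix.det_nonsing_inv,
      Matrix.det_nonsing_inv, Fintype.card_fin]
    rw [mul_pow, ← pow_mul]
    simp [Ring.inverse_eq_inv']
  have hdetTpos : 0 < LinearMap.det T := by
    rw [hdetT]
    positivity
  -- continuity of the integrand
  have hof : Continuous fun X : Fin l → Fin n → ℝ => Matrix.of X :=
    continuous_matrix fun i j => (continuous_apply j).comp (continuous_apply i)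
  have hcont : Continuous fun X : Fin l → Fin n → ℝ =>
      Real.exp (a * (-(((Matrix.of X)ᵀ * S * Matrix.of X) * A).trace
        + ((R * Matrix.of X) * A).trace)) := by
    apply Real.continuous_exp.comp
    apply continuous_const.mul
    apply Continuous.add
    · exact (((hof.matrix_transpose.matrix_mul continuous_const).matrix_mul
        hof).matrix_mul continuous_const).matrix_trace.neg
    · exact ((continuous_const.matrix_mul hof).matrix_mul
        continuous_const).matrix_trace
  -- change of variables
  have hcv := integral_comp_linearMap l n T hdetTpos.ne'
    (fun X => Real.exp (a * (-(((Matrix.of X)ᵀ * S * Matrix.of X) * A).trace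
      + ((R * Matrix.of X) * A).trace))) hcont
  have hint : (∫ X : Fin l → Fin n → ℝ,
      Real.exp (a * (-(((Matrix.of X)ᵀ * S * Matrix.of X) * A).trace
        + ((R * Matrix.of X) * A).trace)))
      = LinearMap.det T * ∫ Y : Fin l → Fin n → ℝ,
          Real.exp (a * (-(((Matrix.of (T Y))ᵀ * S * Matrix.of (T Y)) * A).trace
            + ((R * Matrix.of (T Y)) * A).trace)) := by
    rw [hcv, abs_of_pos hdetTpos]
    field_simp
  rw [hint]
  -- the coefficient matrix of the linear term
  set C : Matrix (Fin n) (Fin l) ℝ := Q * R * P⁻¹ with hCdef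
  set c : Fin l → Fin n → ℝ := fun i j => sa * C j i with hcdef
  -- pointwise identification of the integrand
  have hpoint : ∀ Y : Fin l → Fin n → ℝ,
      a * (-(((Matrix.of (T Y))ᵀ * S * Matrix.of (T Y)) * A).trace
        + ((R * Matrix.of (T Y)) * A).trace)
      = -(∑ i, ∑ j, (Y i j) ^ 2) + ∑ i, ∑ j, c i j * Y i j := by
    intro Y
    have hTY : Matrix.of (T Y) = U * Matrix.of Y * Q⁻¹ := rfl
    set Y' := Matrix.of Y with hY'def
    -- quadratic part
    have hmat : ((U * Y' * Q⁻¹)ᵀ * S * (U * Y' * Q⁻¹)) * A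
        = (sa⁻¹ * sa⁻¹) • (Q⁻¹ * (Y'ᵀ * (Y' * Q))) := by
      rw [hUdef]
      simp only [Matrix.transpose_smul, Matrix.transpose_mul,
        Matrix.transpose_nonsing_inv, hPsymm, hQsymm, Matrix.smul_mul,
        Matrix.mul_smul, smul_smul]
      congr 1
      simp only [Matrix.mul_assoc]
      rw [← hPP, ← hQQ]
      simp only [Matrix.mul_assoc]
      rw [Matrix.nonsing_inv_mul_cancel_left _ _ hQunit,
        Matrix.nonsing_inv_mul_cancel_left _ _ hPunit,
        Matrix.mul_nonsing_inv_cancel_left _ _ hPunit]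
    have hquadtr : (((U * Y' * Q⁻¹)ᵀ * S * (U * Y' * Q⁻¹)) * A).trace
        = (sa⁻¹ * sa⁻¹) * (Y'ᵀ * Y').trace := by
      rw [hmat, Matrix.trace_smul, smul_eq_mul]
      congr 1
      rw [Matrix.trace_mul_comm]
      simp only [Matrix.mul_assoc]
      rw [Matrix.mul_nonsing_inv _ hQunit, Matrix.mul_one]
    have hfrob : (Y'ᵀ * Y').trace = ∑ i, ∑ j, (Y i j) ^ 2 := by
      rw [Matrix.trace]
      simp only [Matrix.diag_apply, Matrix.mul_apply, Matrix.transpose_apply]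
      rw [Finset.sum_comm]
      simp [hY'def, sq]
    -- linear part
    have hlinmat : (R * (U * Y' * Q⁻¹)) * A = sa⁻¹ • (R * (P⁻¹ * (Y' * Q))) := by
      rw [hUdef]
      simp only [Matrix.smul_mul, Matrix.mul_smul, Matrix.mul_assoc]
      congr 1
      rw [← hQQ, Matrix.nonsing_inv_mul_cancel_left _ _ hQunit]
    have hlintr : ((R * (U * Y' * Q⁻¹)) * A).trace = sa⁻¹ * (C * Y').trace := by
      rw [hlinmat, Matrix.trace_smul, smul_eq_mul]
      congr 1
      rw [show R * (P⁻¹ * (Y' * Q)) = ((R * P⁻¹) * Y') * Q by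
        simp only [Matrix.mul_assoc]]
      rw [Matrix.trace_mul_comm, hCdef]
      simp only [Matrix.mul_assoc]
    have hlinsum : (C * Y').trace = ∑ i, ∑ j, C j i * Y i j := by
      rw [Matrix.trace]
      simp only [Matrix.diag_apply, Matrix.mul_apply]
      rw [Finset.sum_comm]
      simp [hY'def]
    rw [hTY, hquadtr, hlintr, hfrob, hlinsum]
    have e1 : a * sa⁻¹ * sa⁻¹ = 1 := by
      rw [← hsa]; field_simp
    have e2 : a * sa⁻¹ = sa := by
      rw [← hsa]; field_simp
    have hc' : ∑ i, ∑ j, c i j * Y i j = sa * ∑ i, ∑ j, C j i * Y i j := by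
      rw [Finset.mul_sum]
      refine Finset.sum_congr rfl fun i _ => ?_
      rw [Finset.mul_sum]
      refine Finset.sum_congr rfl fun j _ => ?_
      rw [hcdef]; ring
    rw [hc']
    have e3 : a * (-(sa⁻¹ * sa⁻¹ * (∑ i, ∑ j, (Y i j) ^ 2))
          + sa⁻¹ * ∑ i, ∑ j, C j i * Y i j)
        = (a * sa⁻¹ * sa⁻¹) * (-(∑ i, ∑ j, (Y i j) ^ 2))
          + (a * sa⁻¹) * ∑ i, ∑ j, C j i * Y i j := by ring
    rw [e3, e1, e2, one_mul]
  simp_rw [hpoint]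
  rw [gauss_pi l n c]
  -- sum of squares of the linear coefficients
  have hCsq : ∑ i, ∑ j, c i j ^ 2 = a * ((R * S⁻¹ * Rᵀ) * A).trace := by
    have hCC : C * Cᵀ = Q * ((R * S⁻¹ * Rᵀ) * Q) := by
      rw [hCdef]
      simp only [Matrix.transpose_mul, Matrix.transpose_nonsing_inv, hPsymm, hQsymm]
      rw [show S⁻¹ = P⁻¹ * P⁻¹ by rw [← hPP, Matrix.mul_inv_rev]]
      simp only [Matrix.mul_assoc]
    have htr : (C * Cᵀ).trace = ((R * S⁻¹ * Rᵀ) * A).trace := by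
      rw [hCC, Matrix.trace_mul_comm]
      simp only [Matrix.mul_assoc]
      rw [hQQ]
    have hsum : (C * Cᵀ).trace = ∑ j, ∑ i, C j i ^ 2 := by
      rw [Matrix.trace]
      simp only [Matrix.diag_apply, Matrix.mul_apply, Matrix.transpose_apply]
      simp [sq]
    rw [hcdef]
    simp only [mul_pow, hsa2, ← Finset.mul_sum]
    rw [Finset.sum_comm, ← hsum, htr]
  rw [hCsq, hdetT]
  -- final scalar computation
  rw [hPdetsqrt, hQdetsqrt]
  have hradA : A.det ^ (-(l : ℝ) / 2) = (Real.sqrt A.det)⁻¹ ^ l := by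
    have h : (-(l : ℝ) / 2) = ((1 : ℝ)/2) * (-(l : ℝ)) := by ring
    rw [h, Real.rpow_mul hAdet.le, Real.rpow_neg (Real.rpow_nonneg hAdet.le _),
      Real.rpow_natCast, ← Real.sqrt_eq_rpow, inv_pow]
  have hradS : S.det ^ (-(n : ℝ) / 2) = (Real.sqrt S.det)⁻¹ ^ n := by
    have h : (-(n : ℝ) / 2) = ((1 : ℝ)/2) * (-(n : ℝ)) := by ring
    rw [h, Real.rpow_mul hSdet.le, Real.rpow_neg (Real.rpow_nonneg hSdet.le _),
      Real.rpow_natCast, ← Real.sqrt_eq_rpow, inv_pow]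
  have hradpi : (Real.pi / a) ^ (((n : ℝ) * l) / 2)
      = Real.sqrt Real.pi ^ (n * l) * sa⁻¹ ^ (n * l) := by
    have h : (((n : ℝ) * l) / 2) = ((1 : ℝ)/2) * ((n * l : ℕ) : ℝ) := by
      push_cast; ring
    have hpa : 0 ≤ Real.pi / a := by positivity
    rw [h, Real.rpow_mul hpa, Real.rpow_natCast, ← Real.sqrt_eq_rpow,
      Real.sqrt_div Real.pi_pos.le, hsadef, ← mul_pow]
    rw [div_eq_mul_inv]
  rw [hradA, hradS, hradpi]
  rw [show a * ((R * S⁻¹ * Rᵀ) * A).trace / 4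
      = a / 4 * ((R * S⁻¹ * Rᵀ) * A).trace by ring]
  rw [mul_comm l n]
  ring
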